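/- In the two-player Levine game with infinite stacks, if both players use the first-black-hat strategy (each names the index of the first black hat in the other player's stack), the probability of victory equals 1/3. Equivalently, with k(y) = -⌊log₂ y⌋ for y ∈ (0,1), one has ∫₀¹∫₀¹ ε(2^{k(y)} x) ε(2^{k(x)} y) dx dy = 1/3. -/

import Mathlib

open Set MeasureTheory

/-- `ε(t) = ⌊t⌋ - 2⌊t/2⌋`, the parity of `⌊t⌋`. -/
noncomputable def eps (t : ℝ) : ℝ := (⌊t⌋ : ℝ) - 2 * (⌊t / 2⌋ : ℝ)

/-- The first-black-hat choice function: `k(y) = -⌊log₂ y⌋`. -/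
noncomputable def fbh (y : ℝ) : ℤ := -⌊Real.logb 2 y⌋

lemma eps_zero {t : ℝ} (h0 : 0 ≤ t) (h1 : t < 1) : eps t = 0 := by
  have ha : ⌊t⌋ = 0 := Int.floor_eq_zero_iff.mpr ⟨h0, h1⟩
  have hb : ⌊t / 2⌋ = 0 := Int.floor_eq_zero_iff.mpr ⟨by linarith, by linarith⟩
  simp [eps, ha, hb]

lemma eps_one {t : ℝ} (h0 : 1 ≤ t) (h1 : t < 2) : eps t = 1 := by
  have ha : ⌊t⌋ = 1 := by
    rw [Int.floor_eq_iff]; constructor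
    · exact_mod_cast h0
    · push_cast; linarith
  have hb : ⌊t / 2⌋ = 0 := Int.floor_eq_zero_iff.mpr ⟨by linarith, by linarith⟩
  simp [eps, ha, hb]

lemma fbh_mul_mem {x : ℝ} (hx : 0 < x) : (2:ℝ) ^ (fbh x) * x ∈ Set.Ico (1:ℝ) 2 := by
  set l := ⌊Real.logb 2 x⌋ with hl
  have h1 : (l:ℝ) ≤ Real.logb 2 x := Int.floor_le _
  have h2 : Real.logb 2 x < l + 1 := Int.lt_floor_add_one _
  have hx' : (2:ℝ) ^ (Real.logb 2 x) = x := Real.rpow_logb two_pos (by norm_num) hx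
  have hc : ((fbh x : ℤ) : ℝ) = -(l:ℝ) := by simp [fbh, hl]
  have key : (2:ℝ) ^ (fbh x) * x = (2:ℝ) ^ (Real.logb 2 x - l) := by
    calc (2:ℝ) ^ (fbh x) * x = (2:ℝ) ^ ((fbh x : ℝ)) * x := by rw [Real.rpow_intCast]
    _ = (2:ℝ) ^ (-(l:ℝ)) * (2:ℝ) ^ (Real.logb 2 x) := by rw [hc, hx']
    _ = (2:ℝ) ^ (Real.logb 2 x - l) := by rw [← Real.rpow_add two_pos]; ring_nf
  rw [key]
  constructor
  · calc (1:ℝ) = (2:ℝ) ^ (0:ℝ) := by norm_num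
    _ ≤ (2:ℝ) ^ (Real.logb 2 x - l) :=
        Real.rpow_le_rpow_of_exponent_le one_le_two (by linarith)
  · calc (2:ℝ) ^ (Real.logb 2 x - l) < (2:ℝ) ^ (1:ℝ) :=
        Real.rpow_lt_rpow_of_exponent_lt one_lt_two (by linarith)
    _ = 2 := Real.rpow_one 2

lemma fbh_eq_iff {x : ℝ} (hx : 0 < x) (k : ℤ) :
    fbh x = k ↔ (2:ℝ) ^ k * x ∈ Set.Ico (1:ℝ) 2 := by
  constructor
  · rintro rfl; exact fbh_mul_mem hx
  · rintro ⟨h1, h2⟩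
    have hj := fbh_mul_mem hx
    have step : ∀ a b : ℤ, (2:ℝ)^a * x ∈ Set.Ico (1:ℝ) 2 →
        (2:ℝ)^b * x ∈ Set.Ico (1:ℝ) 2 → a ≤ b := by
      intro a b ha hb
      have hpb : (0:ℝ) < (2:ℝ)^b := by positivity
      have hlt : (2:ℝ)^a * x < (2:ℝ)^(b+1) * x := by
        rw [zpow_add_one₀ (two_ne_zero)]
        calc (2:ℝ)^a * x < 2 := ha.2
        _ ≤ (2:ℝ)^b * x * 2 := by nlinarith [hb.1]
        _ = (2:ℝ)^b * 2 * x := by ring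
      have h2 := (mul_lt_mul_iff_left₀ hx).mp hlt
      have h3 := (zpow_lt_zpow_iff_right₀ (one_lt_two : (1:ℝ) < 2)).mp h2
      omega
    exact le_antisymm (step _ _ (fbh_mul_mem hx) ⟨h1, h2⟩) (step _ _ ⟨h1, h2⟩ (fbh_mul_mem hx))

lemma eps_zpow_mul_eq_zero {j k : ℤ} {t : ℝ} (h : (2:ℝ)^j * t ∈ Set.Ico (1:ℝ) 2)
    (hk : k < j) : eps ((2:ℝ)^k * t) = 0 := by
  have hjp : (0:ℝ) < (2:ℝ)^j := by positivity
  have ht : 0 < t := by nlinarith [h.1]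
  apply eps_zero (by positivity)
  have hsplit : (2:ℝ)^k * t = (2:ℝ)^(k-j) * ((2:ℝ)^j * t) := by
    rw [← mul_assoc, ← zpow_add₀ (two_ne_zero : (2:ℝ) ≠ 0)]
    ring_nf
  rw [hsplit]
  have hle : (2:ℝ)^(k-j) ≤ (2:ℝ)^(-1:ℤ) := by
    apply zpow_le_zpow_right₀ one_le_two; omega
  have hhalf : (2:ℝ)^(-1:ℤ) = 1/2 := by norm_num
  rw [hhalf] at hle
  nlinarith [h.2, h.1, (by positivity : (0:ℝ) < (2:ℝ)^(k-j))]

lemma integrand_eq {x y : ℝ} (hx : x ∈ Set.Ioc (0:ℝ) 1) (hy : 0 < y) :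
    eps ((2:ℝ)^(fbh y) * x) * eps ((2:ℝ)^(fbh x) * y)
      = Set.indicator (Set.Ico ((2:ℝ)^(-fbh y)) ((2:ℝ)^(-fbh y + 1))) (fun _ => (1:ℝ)) x := by
  have hy2 := fbh_mul_mem hy
  set k := fbh y with hk
  by_cases hmem : x ∈ Set.Ico ((2:ℝ)^(-k)) ((2:ℝ)^(-k+1))
  · have hkp : (0:ℝ) < (2:ℝ)^k := by positivity
    have e1 : (2:ℝ)^k * (2:ℝ)^(-k) = 1 := by
      rw [← zpow_add₀ (two_ne_zero : (2:ℝ) ≠ 0)]; simp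
    have e2 : (2:ℝ)^k * (2:ℝ)^(-k+1) = 2 := by
      rw [← zpow_add₀ (two_ne_zero : (2:ℝ) ≠ 0)]; norm_num
    have hks : (2:ℝ)^k * x ∈ Set.Ico (1:ℝ) 2 := by
      obtain ⟨hm1, hm2⟩ := hmem
      constructor
      · nlinarith
      · nlinarith
    have hfx : fbh x = k := (fbh_eq_iff hx.1 k).mpr hks
    rw [Set.indicator_of_mem hmem, eps_one hks.1 hks.2, hfx, eps_one hy2.1 hy2.2]
    norm_num
  · rw [Set.indicator_of_notMem hmem]
    have hfx : fbh x ≠ k := by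
      intro h
      apply hmem
      have hks := (fbh_eq_iff hx.1 k).mp h
      have hp : (0:ℝ) < (2:ℝ)^(-k) := by positivity
      have e1 : (2:ℝ)^(-k) * ((2:ℝ)^k * x) = x := by
        rw [← mul_assoc, ← zpow_add₀ (two_ne_zero : (2:ℝ) ≠ 0)]; simp
      have e2 : (2:ℝ)^(-k+1) = 2 * (2:ℝ)^(-k) := by
        rw [zpow_add₀ (two_ne_zero : (2:ℝ) ≠ 0)]; ring
      constructor
      · nlinarith [hks.1]
      · rw [e2]; nlinarith [hks.2]
    rcases hfx.lt_or_gt with h | h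
    · rw [eps_zpow_mul_eq_zero hy2 h, mul_zero]
    · rw [eps_zpow_mul_eq_zero (fbh_mul_mem hx.1) h, zero_mul]

lemma fbh_pos {y : ℝ} (hy : y ∈ Set.Ioo (0:ℝ) 1) : 1 ≤ fbh y := by
  have hneg : Real.logb 2 y < 0 := Real.logb_neg one_lt_two hy.1 hy.2
  have : ⌊Real.logb 2 y⌋ < 0 := Int.floor_lt.mpr (by exact_mod_cast hneg)
  simp only [fbh]; omega

lemma inner_eval {y : ℝ} (hy : y ∈ Set.Ioo (0:ℝ) 1) :
    ∫ x in (0:ℝ)..1, eps ((2:ℝ)^(fbh y) * x) * eps ((2:ℝ)^(fbh x) * y)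
      = (2:ℝ)^(-fbh y) := by
  set k := fbh y with hk
  have hk1 : 1 ≤ k := fbh_pos hy
  rw [intervalIntegral.integral_of_le zero_le_one]
  rw [MeasureTheory.setIntegral_congr_fun measurableSet_Ioc
    (fun x hx => integrand_eq hx hy.1)]
  rw [MeasureTheory.setIntegral_indicator measurableSet_Ico]
  have hsub : Set.Ioc (0:ℝ) 1 ∩ Set.Ico ((2:ℝ)^(-k)) ((2:ℝ)^(-k+1))
      = Set.Ico ((2:ℝ)^(-k)) ((2:ℝ)^(-k+1)) := by
    apply Set.inter_eq_self_of_subset_right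
    intro t ht
    have hp : (0:ℝ) < (2:ℝ)^(-k) := by positivity
    have hb : (2:ℝ)^(-k+1) ≤ (2:ℝ)^(0:ℤ) := by
      apply zpow_le_zpow_right₀ one_le_two; omega
    refine ⟨lt_of_lt_of_le hp ht.1, ?_⟩
    have := ht.2
    simp only [zpow_zero] at hb
    linarith
  rw [hsub, MeasureTheory.setIntegral_const]
  rw [measureReal_def, Real.volume_Ico, smul_eq_mul, mul_one]
  rw [ENNReal.toReal_ofReal (by
    have : (2:ℝ)^(-k) ≤ (2:ℝ)^(-k+1) := by
      apply zpow_le_zpow_right₀ one_le_two; omega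
    linarith)]
  have e2 : (2:ℝ)^(-k+1) = 2 * (2:ℝ)^(-k) := by
    rw [zpow_add₀ (two_ne_zero : (2:ℝ) ≠ 0)]; ring
  rw [e2]; ring

lemma mem_Ico_fbh {t : ℝ} (ht : 0 < t) :
    t ∈ Set.Ico ((2:ℝ)^(-fbh t)) ((2:ℝ)^(-fbh t + 1)) := by
  have hks := fbh_mul_mem ht
  set k := fbh t
  have hp : (0:ℝ) < (2:ℝ)^(-k) := by positivity
  have e1 : (2:ℝ)^(-k) * ((2:ℝ)^k * t) = t := by
    rw [← mul_assoc, ← zpow_add₀ (two_ne_zero : (2:ℝ) ≠ 0)]; simp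
  have e2 : (2:ℝ)^(-k+1) = 2 * (2:ℝ)^(-k) := by
    rw [zpow_add₀ (two_ne_zero : (2:ℝ) ≠ 0)]; ring
  constructor
  · nlinarith [hks.1]
  · rw [e2]; nlinarith [hks.2]

theorem fbh_vs_fbh_value :
    ∫ y in (0 : ℝ)..1, ∫ x in (0 : ℝ)..1,
        eps ((2 : ℝ) ^ (fbh y) * x) * eps ((2 : ℝ) ^ (fbh x) * y) = 1 / 3 := by
  rw [intervalIntegral.integral_of_le zero_le_one,
    MeasureTheory.integral_Ioc_eq_integral_Ioo]
  rw [MeasureTheory.setIntegral_congr_fun measurableSet_Ioo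
    (fun y hy => inner_eval hy)]
  -- now compute ∫ y in Ioo 0 1, 2^(-fbh y)
  set s : ℕ → Set ℝ := fun n => Set.Ico ((2:ℝ)^(-(n+1:ℤ))) ((2:ℝ)^(-(n:ℤ))) with hs
  have hunion : (⋃ n, s n) = Set.Ioo (0:ℝ) 1 := by
    ext t
    simp only [Set.mem_iUnion, hs, Set.mem_Ico, Set.mem_Ioo]
    constructor
    · rintro ⟨n, h1, h2⟩
      have hp : (0:ℝ) < (2:ℝ)^(-(n+1:ℤ)) := by positivity
      have hb : (2:ℝ)^(-(n:ℤ)) ≤ 1 := by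
        have h := zpow_le_zpow_right₀ (one_le_two : (1:ℝ) ≤ 2)
          (by omega : -(n:ℤ) ≤ 0)
        simpa using h
      exact ⟨lt_of_lt_of_le hp h1, lt_of_lt_of_le h2 hb⟩
    · rintro ⟨h1, h2⟩
      have hk1 : 1 ≤ fbh t := fbh_pos ⟨h1, h2⟩
      refine ⟨(fbh t - 1).toNat, ?_, ?_⟩
      · have hn : (((fbh t - 1).toNat : ℤ) + 1) = fbh t := by
          rw [Int.toNat_of_nonneg (by omega)]; ring
        rw [show (-(((fbh t - 1).toNat : ℤ) + 1)) = -fbh t by omega]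
        exact (mem_Ico_fbh h1).1
      · rw [show (-((fbh t - 1).toNat : ℤ)) = -fbh t + 1 by
          rw [Int.toNat_of_nonneg (by omega)]; ring]
        exact (mem_Ico_fbh h1).2
  have hmeas : ∀ n, MeasurableSet (s n) := fun n => measurableSet_Ico
  have hdisj : Pairwise (Function.onFun Disjoint s) := by
    intro m n hmn
    simp only [Function.onFun, hs]
    rw [Set.Ico_disjoint_Ico]
    rcases lt_or_gt_of_ne hmn with h | h
    · exact le_trans (inf_le_right.trans
        (zpow_le_zpow_right₀ one_le_two (by omega : -(n:ℤ) ≤ -((m:ℤ)+1)))) le_sup_left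
    · exact le_trans (inf_le_left.trans
        (zpow_le_zpow_right₀ one_le_two (by omega : -(m:ℤ) ≤ -((n:ℤ)+1)))) le_sup_right
  have hmble : Measurable (fun y : ℝ => (2:ℝ)^(-fbh y)) := by
    have h1 : Measurable fbh := ((Real.measurable_log.div_const _).floor).neg
    exact (measurable_from_top (f := fun n : ℤ => (2:ℝ)^(-n))).comp h1
  have hint : MeasureTheory.IntegrableOn (fun y : ℝ => (2:ℝ)^(-fbh y))
      (Set.Ioo (0:ℝ) 1) := by
    apply MeasureTheory.Measure.integrableOn_of_bounded
      (by simp [Real.volume_Ioo] : MeasureTheory.volume (Set.Ioo (0:ℝ) 1) ≠ ⊤)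
      hmble.aestronglyMeasurable (M := 1)
    rw [MeasureTheory.ae_restrict_iff' measurableSet_Ioo]
    filter_upwards with y hy
    have h1 := fbh_pos hy
    have hle : (2:ℝ)^(-fbh y) ≤ 1 := by
      have h := zpow_le_zpow_right₀ (one_le_two : (1:ℝ) ≤ 2)
        (by omega : -fbh y ≤ 0)
      simpa using h
    rw [Real.norm_eq_abs, abs_of_pos (by positivity)]
    exact hle
  rw [← hunion, MeasureTheory.integral_iUnion hmeas hdisj (hunion ▸ hint)]
  have hpiece : ∀ n : ℕ, (∫ y in s n, (2:ℝ)^(-fbh y)) = (1/4:ℝ)^(n+1) := by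
    intro n
    have hcong : Set.EqOn (fun y : ℝ => (2:ℝ)^(-fbh y))
        (fun _ : ℝ => (2:ℝ)^(-(n+1:ℤ))) (s n) := by
      intro y hy
      simp only [hs, Set.mem_Ico] at hy
      have hy0 : 0 < y := lt_of_lt_of_le (by positivity) hy.1
      have hfy : fbh y = (n+1:ℤ) := by
        rw [fbh_eq_iff hy0]
        have e1 : (2:ℝ)^(n+1:ℤ) * (2:ℝ)^(-(n+1:ℤ)) = 1 := by
          rw [← zpow_add₀ (two_ne_zero : (2:ℝ) ≠ 0),
            show ((n:ℤ)+1) + -((n:ℤ)+1) = 0 by ring, zpow_zero]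
        have e2 : (2:ℝ)^(n+1:ℤ) * (2:ℝ)^(-(n:ℤ)) = 2 := by
          rw [← zpow_add₀ (two_ne_zero : (2:ℝ) ≠ 0),
            show ((n:ℤ)+1) + -(n:ℤ) = 1 by ring, zpow_one]
        have hp : (0:ℝ) < (2:ℝ)^(n+1:ℤ) := by positivity
        constructor
        · nlinarith [hy.1]
        · nlinarith [hy.2]
      simp only [hfy]
    rw [MeasureTheory.setIntegral_congr_fun (hmeas n) hcong,
      MeasureTheory.setIntegral_const, hs]
    have hord : (2:ℝ)^(-(n+1:ℤ)) ≤ (2:ℝ)^(-(n:ℤ)) :=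
      zpow_le_zpow_right₀ one_le_two (by omega)
    beta_reduce
    rw [measureReal_def, Real.volume_Ico, smul_eq_mul, ENNReal.toReal_ofReal (by linarith)]
    have e2 : (2:ℝ)^(-(n:ℤ)) = 2 * (2:ℝ)^(-(n+1:ℤ)) := by
      rw [show (-(n:ℤ)) = 1 + -((n:ℤ)+1) by ring,
        zpow_add₀ (two_ne_zero : (2:ℝ) ≠ 0), zpow_one]
    have hpow : (2:ℝ)^(-(n+1:ℤ)) = (1/2:ℝ)^(n+1) := by
      rw [one_div, inv_pow, ← zpow_natCast (2:ℝ) (n+1), ← zpow_neg]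
      norm_num
    rw [e2, hpow]
    rw [show (2 * (1/2:ℝ)^(n+1) - (1/2:ℝ)^(n+1)) * (1/2:ℝ)^(n+1)
        = ((1/2:ℝ) * (1/2:ℝ))^(n+1) by rw [mul_pow]; ring]
    norm_num
  rw [tsum_congr hpiece]
  calc ∑' n : ℕ, (1/4:ℝ)^(n+1) = ∑' n : ℕ, (1/4:ℝ)^n * (1/4) := by
        simp [pow_succ]
  _ = (∑' n : ℕ, (1/4:ℝ)^n) * (1/4) := tsum_mul_right
  _ = (1 - 1/4)⁻¹ * (1/4) := by
        rw [tsum_geometric_of_lt_one (by norm_num) (by norm_num)]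
  _ = 1/3 := by norm_num
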